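/- (Proposition 6.4, recursive form) For every n ≥ 1, the set of 2-Brauer relations of rank n is finite and its cardinality equals M(n), the n-th Motzkin number. -/

import Mathlib

/-- The Motzkin numbers: `M 0 = 1`, `M 1 = 1` and, for `n ≥ 2`,
`M n = M (n-1) + ∑_{i=0}^{n-2} M i * M (n-2-i)`. -/
def motzkin : ℕ → ℕ
  | 0 => 1
  | 1 => 1
  | n + 2 =>
      motzkin (n + 1) +
        ∑ i ∈ (Finset.range (n + 1)).attach, motzkin i.1 * motzkin (n - i.1)
decreasing_by
  all_goals
    first
      | omega
      | (have h := Finset.mem_range.mp i.2; omega)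

/-- A `2`-Brauer relation of rank `n`: an involution `σ` of `ZMod n` which is
noncrossing with respect to the circular placement of `ZMod n` (ordered by
the value map `ZMod.val`). -/
def IsTwoBrauer (n : ℕ) (σ : ZMod n → ZMod n) : Prop :=
  Function.Involutive σ ∧
    ¬ ∃ i j : ZMod n, i.val < j.val ∧ j.val < (σ i).val ∧ (σ i).val < (σ j).val

/-- Proposition 6.4 (recursive form): for every `n ≥ 1`, the set of `2`-Brauer
relations of rank `n` is finite and its cardinality is the `n`-th Motzkin number. -/
def NC (n : ℕ) (σ : Fin n → Fin n) : Prop :=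
  Function.Involutive σ ∧
    ¬ ∃ i j : Fin n, i.val < j.val ∧ j.val < (σ i).val ∧ (σ i).val < (σ j).val

noncomputable def fcnt (n : ℕ) : ℕ := Nat.card {σ : Fin n → Fin n // NC n σ}

lemma NC.invol {n σ} (h : NC n σ) : Function.Involutive σ := h.1

lemma NC.nocross {n σ} (h : NC n σ) (i j : Fin n) :
    ¬ (i.val < j.val ∧ j.val < (σ i).val ∧ (σ i).val < (σ j).val) := by
  intro hc; exact h.2 ⟨i, j, hc⟩

/-! ### Case A : σ 0 = 0 -/

def toTau (n : ℕ) (σ : Fin (n+2) → Fin (n+2)) : Fin (n+1) → Fin (n+1) :=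
  fun i => ⟨(σ ⟨i.val + 1, by omega⟩).val - 1, by
    have := (σ ⟨i.val + 1, by omega⟩).isLt; omega⟩

lemma toTau_val (n : ℕ) (σ : Fin (n+2) → Fin (n+2)) (i : Fin (n+1)) (j : Fin (n+2))
    (hj : j.val = i.val + 1) : (toTau n σ i).val = (σ j).val - 1 := by
  have : (⟨i.val + 1, by omega⟩ : Fin (n+2)) = j := by ext; simp; omega
  simp [toTau, this]

def fromTau (n : ℕ) (τ : Fin (n+1) → Fin (n+1)) : Fin (n+2) → Fin (n+2) :=
  fun j => if h : j.val = 0 then 0 else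
    ⟨(τ ⟨j.val - 1, by have := j.isLt; omega⟩).val + 1, by
      have := (τ ⟨j.val - 1, by have := j.isLt; omega⟩).isLt; omega⟩

lemma fromTau_val_zero (n : ℕ) (τ) (j : Fin (n+2)) (hj : j.val = 0) :
    (fromTau n τ j).val = 0 := by simp [fromTau, hj]

lemma fromTau_val_pos (n : ℕ) (τ) (j : Fin (n+2)) (i : Fin (n+1))
    (hj : j.val = i.val + 1) : (fromTau n τ j).val = (τ i).val + 1 := by
  have h0 : j.val ≠ 0 := by omega
  have : (⟨j.val - 1, by have := j.isLt; omega⟩ : Fin (n+1)) = i := by ext; simp; omega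
  simp [fromTau, h0, this]

lemma sigma_ne_zero {n : ℕ} {σ : Fin (n+2) → Fin (n+2)} (hσ : Function.Involutive σ)
    (h0 : σ 0 = 0) (j : Fin (n+2)) (hj : j.val ≠ 0) : (σ j).val ≠ 0 := by
  intro h
  have hz : σ j = 0 := by ext; simpa using h
  have := congrArg σ hz
  rw [hσ j, h0] at this
  exact hj (by simp [this])

lemma NC_toTau (n : ℕ) (σ : Fin (n+2) → Fin (n+2)) (hσ : NC (n+2) σ) (h0 : σ 0 = 0) :
    NC (n+1) (toTau n σ) := by
  constructor
  · intro i
    have h1 := toTau_val n σ i ⟨i.val + 1, by omega⟩ (by simp)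
    have hne : (σ ⟨i.val + 1, by omega⟩).val ≠ 0 :=
      sigma_ne_zero hσ.invol h0 _ (by simp)
    have h2 := toTau_val n σ (toTau n σ i) (σ ⟨i.val + 1, by omega⟩) (by omega)
    rw [hσ.invol ⟨i.val + 1, by omega⟩] at h2
    ext; simp at h2 ⊢; omega
  · rintro ⟨i, j, hij, hji, hjj⟩
    have h1 := toTau_val n σ i ⟨i.val + 1, by omega⟩ (by simp)
    have h2 := toTau_val n σ j ⟨j.val + 1, by omega⟩ (by simp)
    have hne1 : (σ ⟨i.val + 1, by omega⟩).val ≠ 0 := sigma_ne_zero hσ.invol h0 _ (by simp)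
    have hne2 : (σ ⟨j.val + 1, by omega⟩).val ≠ 0 := sigma_ne_zero hσ.invol h0 _ (by simp)
    exact hσ.nocross ⟨i.val + 1, by omega⟩ ⟨j.val + 1, by omega⟩
      ⟨by simp; omega, by simp; omega, by omega⟩

lemma NC_fromTau (n : ℕ) (τ : Fin (n+1) → Fin (n+1)) (hτ : NC (n+1) τ) :
    NC (n+2) (fromTau n τ) := by
  constructor
  · intro j
    by_cases h : j.val = 0
    · have h1 := fromTau_val_zero n τ j h
      have h2 := fromTau_val_zero n τ (fromTau n τ j) h1
      ext; omega
    · obtain ⟨i, hi⟩ : ∃ i : Fin (n+1), j.val = i.val + 1 :=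
        ⟨⟨j.val - 1, by have := j.isLt; omega⟩, by simp; omega⟩
      have h1 := fromTau_val_pos n τ j i hi
      have h2 := fromTau_val_pos n τ (fromTau n τ j) (τ i) h1
      rw [hτ.invol i] at h2
      ext; omega
  · rintro ⟨i, j, hij, hji, hjj⟩
    by_cases hi : i.val = 0
    · rw [fromTau_val_zero n τ i hi] at hji; omega
    obtain ⟨i', hi'⟩ : ∃ x : Fin (n+1), i.val = x.val + 1 :=
      ⟨⟨i.val - 1, by have := i.isLt; omega⟩, by simp; omega⟩
    obtain ⟨j', hj'⟩ : ∃ x : Fin (n+1), j.val = x.val + 1 :=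
      ⟨⟨j.val - 1, by have := j.isLt; omega⟩, by simp; omega⟩
    rw [fromTau_val_pos n τ i i' hi'] at hji hjj
    rw [fromTau_val_pos n τ j j' hj'] at hjj
    exact hτ.nocross i' j' ⟨by omega, by omega, by omega⟩

def equivA (n : ℕ) :
    {σ : Fin (n+2) → Fin (n+2) // NC (n+2) σ ∧ σ 0 = 0} ≃
      {τ : Fin (n+1) → Fin (n+1) // NC (n+1) τ} where
  toFun := fun x => ⟨toTau n x.1, NC_toTau n x.1 x.2.1 x.2.2⟩
  invFun := fun x => ⟨fromTau n x.1, NC_fromTau n x.1 x.2, by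
    ext; exact fromTau_val_zero n x.1 0 rfl⟩
  left_inv := by
    rintro ⟨σ, hσ, h0⟩
    ext j
    simp only
    by_cases h : j.val = 0
    · have h1 := fromTau_val_zero n (toTau n σ) j h
      have : j = 0 := by ext; simpa using h
      rw [this] at h1 ⊢
      rw [h0]; omega
    · obtain ⟨i, hi⟩ : ∃ x : Fin (n+1), j.val = x.val + 1 :=
        ⟨⟨j.val - 1, by have := j.isLt; omega⟩, by simp; omega⟩
      have h1 := fromTau_val_pos n (toTau n σ) j i hi
      have h2 := toTau_val n σ i j hi
      have hne : (σ j).val ≠ 0 := sigma_ne_zero hσ.invol h0 j h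
      omega
  right_inv := by
    rintro ⟨τ, hτ⟩
    ext i
    simp only
    have h1 := toTau_val n (fromTau n τ) i ⟨i.val + 1, by omega⟩ (by simp)
    have h2 := fromTau_val_pos n τ ⟨i.val + 1, by omega⟩ i (by simp)
    omega

/-! ### Case B : σ 0 = ⟨k+1⟩ -/

section CaseB

variable (n k : ℕ) (hk : k ≤ n)

-- block facts
lemma sigmaK {σ : Fin (n+2) → Fin (n+2)} (hσ : NC (n+2) σ)
    (h0 : σ 0 = ⟨k+1, by omega⟩) : σ ⟨k+1, by omega⟩ = 0 := by
  have := congrArg σ h0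
  rw [hσ.invol 0] at this
  exact this.symm

lemma block_lo {σ : Fin (n+2) → Fin (n+2)} (hσ : NC (n+2) σ)
    (h0 : σ 0 = ⟨k+1, by omega⟩) (j : Fin (n+2)) (hj0 : 0 < j.val) (hjk : j.val < k+1) :
    0 < (σ j).val ∧ (σ j).val < k+1 := by
  have hK := sigmaK n k hk hσ h0
  have hne0 : (σ j).val ≠ 0 := by
    intro h
    have hz : σ j = 0 := by ext; simpa using h
    have := congrArg σ hz
    rw [hσ.invol j, h0] at this
    have := congrArg Fin.val this
    simp at this; omega
  have hneK : (σ j).val ≠ k+1 := by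
    intro h
    have hz : σ j = ⟨k+1, by omega⟩ := by ext; simpa using h
    have := congrArg σ hz
    rw [hσ.invol j, hK] at this
    have := congrArg Fin.val this
    simp only [Fin.val_zero] at this; omega
  have hnlt : ¬ (k+1 < (σ j).val) := by
    intro h
    refine hσ.nocross 0 j ⟨by simpa using hj0, ?_, ?_⟩
    · rw [h0]; simpa using hjk
    · rw [h0]; simpa using h
  omega

lemma block_hi {σ : Fin (n+2) → Fin (n+2)} (hσ : NC (n+2) σ)
    (h0 : σ 0 = ⟨k+1, by omega⟩) (j : Fin (n+2)) (hjk : k+1 < j.val) :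
    k+1 < (σ j).val := by
  have hK := sigmaK n k hk hσ h0
  have hne0 : (σ j).val ≠ 0 := by
    intro h
    have hz : σ j = 0 := by ext; simpa using h
    have := congrArg σ hz
    rw [hσ.invol j, h0] at this
    have := congrArg Fin.val this
    simp at this; omega
  have hneK : (σ j).val ≠ k+1 := by
    intro h
    have hz : σ j = ⟨k+1, by omega⟩ := by ext; simpa using h
    have := congrArg σ hz
    rw [hσ.invol j, hK] at this
    have := congrArg Fin.val this
    simp only [Fin.val_zero] at this; omega
  have hnlt : ¬ ((σ j).val < k+1) := by
    intro h
    have h2 : σ (σ j) = j := hσ.invol j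
    refine hσ.nocross 0 (σ j) ⟨by simp only [Fin.val_zero]; omega, ?_, ?_⟩
    · rw [h0]; simp; omega
    · rw [h0, h2]; simp; omega
  omega

def toT1 (σ : Fin (n+2) → Fin (n+2))
    (hb : ∀ j : Fin (n+2), 0 < j.val → j.val < k+1 → 0 < (σ j).val ∧ (σ j).val < k+1) :
    Fin k → Fin k :=
  fun i => ⟨(σ ⟨i.val + 1, by have := i.isLt; omega⟩).val - 1, by
    have := hb ⟨i.val + 1, by have := i.isLt; omega⟩ (by simp)
      (by have := i.isLt; show i.val + 1 < k + 1; omega)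
    omega⟩

lemma toT1_val (σ) (hb) (i : Fin k) (j : Fin (n+2)) (hj : j.val = i.val + 1) :
    ((toT1 n k hk σ hb) i).val = (σ j).val - 1 := by
  have : (⟨i.val + 1, by have := i.isLt; omega⟩ : Fin (n+2)) = j := by ext; simp; omega
  simp [toT1, this]

def toT2 (σ : Fin (n+2) → Fin (n+2))
    (hb : ∀ j : Fin (n+2), k+1 < j.val → k+1 < (σ j).val) :
    Fin (n-k) → Fin (n-k) :=
  fun i => ⟨(σ ⟨i.val + k + 2, by have := i.isLt; omega⟩).val - (k + 2), by
    have h1 := hb ⟨i.val + k + 2, by have := i.isLt; omega⟩ (by simp)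
    have h2 := (σ ⟨i.val + k + 2, by have := i.isLt; omega⟩).isLt
    have := i.isLt; omega⟩

lemma toT2_val (σ) (hb) (i : Fin (n-k)) (j : Fin (n+2)) (hj : j.val = i.val + k + 2) :
    ((toT2 n k hk σ hb) i).val = (σ j).val - (k + 2) := by
  have : (⟨i.val + k + 2, by have := i.isLt; omega⟩ : Fin (n+2)) = j := by ext; simp; omega
  simp [toT2, this]

def fromT (τ1 : Fin k → Fin k) (τ2 : Fin (n-k) → Fin (n-k)) :
    Fin (n+2) → Fin (n+2) :=
  fun j =>
    if h0 : j.val = 0 then ⟨k+1, by omega⟩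
    else if hK : j.val = k+1 then 0
    else if h : j.val < k+1 then
      ⟨(τ1 ⟨j.val - 1, by omega⟩).val + 1, by
        have := (τ1 ⟨j.val - 1, by omega⟩).isLt; omega⟩
    else
      ⟨(τ2 ⟨j.val - (k+2), by have := j.isLt; omega⟩).val + k + 2, by
        have := (τ2 ⟨j.val - (k+2), by have := j.isLt; omega⟩).isLt; omega⟩

variable {n k}

lemma fromT_val_zero (τ1 τ2) (j : Fin (n+2)) (hj : j.val = 0) (hk : k ≤ n) :
    (fromT n k hk τ1 τ2 j).val = k + 1 := by simp [fromT, hj]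

lemma fromT_val_K (τ1 τ2) (j : Fin (n+2)) (hj : j.val = k+1) (hk : k ≤ n) :
    (fromT n k hk τ1 τ2 j).val = 0 := by
  have h0 : j.val ≠ 0 := by omega
  simp [fromT, h0, hj]

lemma fromT_val_lo (τ1 τ2) (j : Fin (n+2)) (i : Fin k) (hj : j.val = i.val + 1) (hk : k ≤ n) :
    (fromT n k hk τ1 τ2 j).val = (τ1 i).val + 1 := by
  have hik := i.isLt
  have h0 : ¬ j.val = 0 := by omega
  have h1 : ¬ j.val = k+1 := by omega
  have h2 : j.val < k+1 := by omega
  have : (⟨j.val - 1, by omega⟩ : Fin k) = i := by ext; simp; omega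
  simp [fromT, h0, h1, h2, this]

lemma fromT_val_hi (τ1 τ2) (j : Fin (n+2)) (i : Fin (n-k)) (hj : j.val = i.val + k + 2)
    (hk : k ≤ n) :
    (fromT n k hk τ1 τ2 j).val = (τ2 i).val + k + 2 := by
  have h0 : ¬ j.val = 0 := by omega
  have h1 : ¬ j.val = k+1 := by omega
  have h2 : ¬ j.val < k+1 := by omega
  have : (⟨j.val - (k+2), by have := j.isLt; omega⟩ : Fin (n-k)) = i := by ext; simp; omega
  simp [fromT, h0, h1, h2, this]

end CaseB

section CaseB2

variable {n k : ℕ} (hk : k ≤ n)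

lemma NC_toT1 (σ : Fin (n+2) → Fin (n+2)) (hσ : NC (n+2) σ)
    (hb : ∀ j : Fin (n+2), 0 < j.val → j.val < k+1 → 0 < (σ j).val ∧ (σ j).val < k+1) :
    NC k (toT1 n k hk σ hb) := by
  constructor
  · intro i
    have hik := i.isLt
    set j : Fin (n+2) := ⟨i.val + 1, by omega⟩ with hj
    have h1 := toT1_val n k hk σ hb i j (by simp [hj])
    have hbj := hb j (by simp [hj]) (by simp [hj] <;> omega)
    have h2 := toT1_val n k hk σ hb (toT1 n k hk σ hb i) (σ j) (by omega)
    have h3 := congrArg Fin.val (hσ.invol j)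
    have hjv : j.val = i.val + 1 := rfl
    ext; omega
  · rintro ⟨i, j, hij, hji, hjj⟩
    have hik := i.isLt
    have hjk := j.isLt
    set I : Fin (n+2) := ⟨i.val + 1, by omega⟩ with hI
    set J : Fin (n+2) := ⟨j.val + 1, by omega⟩ with hJ
    have h1 := toT1_val n k hk σ hb i I (by simp [hI])
    have h2 := toT1_val n k hk σ hb j J (by simp [hJ])
    have hbI := hb I (by simp [hI]) (by simp [hI] <;> omega)
    have hbJ := hb J (by simp [hJ]) (by simp [hJ] <;> omega)
    exact hσ.nocross I J ⟨by simp [hI, hJ]; omega, by simp [hJ]; omega, by omega⟩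

lemma NC_toT2 (σ : Fin (n+2) → Fin (n+2)) (hσ : NC (n+2) σ)
    (hb : ∀ j : Fin (n+2), k+1 < j.val → k+1 < (σ j).val) :
    NC (n-k) (toT2 n k hk σ hb) := by
  constructor
  · intro i
    have hik := i.isLt
    set j : Fin (n+2) := ⟨i.val + k + 2, by omega⟩ with hj
    have h1 := toT2_val n k hk σ hb i j (by simp [hj])
    have hbj := hb j (by simp [hj] <;> omega)
    have hsj := (σ j).isLt
    have h2 := toT2_val n k hk σ hb (toT2 n k hk σ hb i) (σ j) (by omega)
    have h3 := congrArg Fin.val (hσ.invol j)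
    have hjv : j.val = i.val + k + 2 := rfl
    ext; omega
  · rintro ⟨i, j, hij, hji, hjj⟩
    have hik := i.isLt
    have hjk := j.isLt
    set I : Fin (n+2) := ⟨i.val + k + 2, by omega⟩ with hI
    set J : Fin (n+2) := ⟨j.val + k + 2, by omega⟩ with hJ
    have h1 := toT2_val n k hk σ hb i I (by simp [hI])
    have h2 := toT2_val n k hk σ hb j J (by simp [hJ])
    have hbI := hb I (by simp [hI] <;> omega)
    have hbJ := hb J (by simp [hJ] <;> omega)
    exact hσ.nocross I J ⟨by simp [hI, hJ]; omega, by simp [hJ]; omega, by omega⟩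

lemma NC_fromT (τ1 : Fin k → Fin k) (τ2 : Fin (n-k) → Fin (n-k))
    (hτ1 : NC k τ1) (hτ2 : NC (n-k) τ2) :
    NC (n+2) (fromT n k hk τ1 τ2) := by
  constructor
  · intro j
    rcases Nat.lt_or_ge j.val (k+1) with h | h
    · rcases Nat.eq_zero_or_pos j.val with h0 | h0
      · have h1 := fromT_val_zero τ1 τ2 j h0 hk
        have h2 := fromT_val_K τ1 τ2 (fromT n k hk τ1 τ2 j) h1 hk
        ext; omega
      · obtain ⟨i, hi⟩ : ∃ i : Fin k, j.val = i.val + 1 := ⟨⟨j.val - 1, by omega⟩, by simp; omega⟩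
        have h1 := fromT_val_lo τ1 τ2 j i hi hk
        have h2 := fromT_val_lo τ1 τ2 (fromT n k hk τ1 τ2 j) (τ1 i) h1 hk
        have h3 := congrArg Fin.val (hτ1.invol i)
        ext; omega
    · rcases Nat.eq_or_lt_of_le h with h0 | h0
      · have h1 := fromT_val_K τ1 τ2 j h0.symm hk
        have h2 := fromT_val_zero τ1 τ2 (fromT n k hk τ1 τ2 j) h1 hk
        ext; omega
      · have hjlt := j.isLt
        obtain ⟨i, hi⟩ : ∃ i : Fin (n-k), j.val = i.val + k + 2 :=
          ⟨⟨j.val - (k+2), by omega⟩, by simp; omega⟩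
        have h1 := fromT_val_hi τ1 τ2 j i hi hk
        have h2 := fromT_val_hi τ1 τ2 (fromT n k hk τ1 τ2 j) (τ2 i) h1 hk
        have h3 := congrArg Fin.val (hτ2.invol i)
        ext; omega
  · rintro ⟨i, j, hij, hji, hjj⟩
    have hilt := i.isLt
    have hjlt := j.isLt
    rcases Nat.eq_zero_or_pos i.val with hi0 | hi0
    · -- i = 0 : fromT i = K, j in (0, K), fromT j ≤ k < K : contradiction with hjj
      have h1 := fromT_val_zero τ1 τ2 i hi0 hk
      obtain ⟨j', hj'⟩ : ∃ x : Fin k, j.val = x.val + 1 := ⟨⟨j.val - 1, by omega⟩, by simp; omega⟩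
      have h2 := fromT_val_lo τ1 τ2 j j' hj' hk
      have := (τ1 j').isLt
      omega
    rcases Nat.lt_or_ge i.val (k+1) with hiK | hiK
    · -- 0 < i < K
      obtain ⟨i', hi'⟩ : ∃ x : Fin k, i.val = x.val + 1 := ⟨⟨i.val - 1, by omega⟩, by simp; omega⟩
      have h1 := fromT_val_lo τ1 τ2 i i' hi' hk
      have hτ1i := (τ1 i').isLt
      obtain ⟨j', hj'⟩ : ∃ x : Fin k, j.val = x.val + 1 := ⟨⟨j.val - 1, by omega⟩, by simp; omega⟩
      have h2 := fromT_val_lo τ1 τ2 j j' hj' hk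
      exact hτ1.nocross i' j' ⟨by omega, by omega, by omega⟩
    rcases Nat.eq_or_lt_of_le hiK with hiK' | hiK'
    · -- i = K : fromT i = 0
      have h1 := fromT_val_K τ1 τ2 i hiK'.symm hk
      omega
    · -- i > K
      obtain ⟨i', hi'⟩ : ∃ x : Fin (n-k), i.val = x.val + k + 2 :=
        ⟨⟨i.val - (k+2), by omega⟩, by simp; omega⟩
      have h1 := fromT_val_hi τ1 τ2 i i' hi' hk
      obtain ⟨j', hj'⟩ : ∃ x : Fin (n-k), j.val = x.val + k + 2 :=
        ⟨⟨j.val - (k+2), by omega⟩, by simp; omega⟩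
      have h2 := fromT_val_hi τ1 τ2 j j' hj' hk
      exact hτ2.nocross i' j' ⟨by omega, by omega, by omega⟩

def equivB :
    {σ : Fin (n+2) → Fin (n+2) // NC (n+2) σ ∧ σ 0 = ⟨k+1, by omega⟩} ≃
      ({τ : Fin k → Fin k // NC k τ} × {τ : Fin (n-k) → Fin (n-k) // NC (n-k) τ}) where
  toFun := fun x =>
    (⟨toT1 n k hk x.1 (fun j h1 h2 => block_lo n k hk x.2.1 x.2.2 j h1 h2),
      NC_toT1 hk x.1 x.2.1 _⟩,
     ⟨toT2 n k hk x.1 (fun j h1 => block_hi n k hk x.2.1 x.2.2 j h1),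
      NC_toT2 hk x.1 x.2.1 _⟩)
  invFun := fun p =>
    ⟨fromT n k hk p.1.1 p.2.1, NC_fromT hk p.1.1 p.2.1 p.1.2 p.2.2, by
      ext; exact fromT_val_zero p.1.1 p.2.1 0 rfl hk⟩
  left_inv := by
    rintro ⟨σ, hσ, h0⟩
    ext j
    simp only
    have hjlt := j.isLt
    have hblo : ∀ j : Fin (n+2), 0 < j.val → j.val < k+1 → 0 < (σ j).val ∧ (σ j).val < k+1 :=
      fun j h1 h2 => block_lo n k hk hσ h0 j h1 h2
    have hbhi : ∀ j : Fin (n+2), k+1 < j.val → k+1 < (σ j).val :=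
      fun j h1 => block_hi n k hk hσ h0 j h1
    set τ1 := toT1 n k hk σ hblo with hτ1
    set τ2 := toT2 n k hk σ hbhi with hτ2
    rcases Nat.eq_zero_or_pos j.val with h0' | h0'
    · have h1 := fromT_val_zero τ1 τ2 j h0' hk
      have h2v : (σ j).val = k + 1 := by
        have : j = 0 := by ext; simpa using h0'
        rw [this, h0]
      omega
    rcases Nat.lt_or_ge j.val (k+1) with hK | hK
    · obtain ⟨j', hj'⟩ : ∃ x : Fin k, j.val = x.val + 1 := ⟨⟨j.val - 1, by omega⟩, by simp; omega⟩
      have h1 := fromT_val_lo τ1 τ2 j j' hj' hk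
      have h2 := toT1_val n k hk σ hblo j' j hj'
      rw [← hτ1] at h2
      have hbj := hblo j (by omega) hK
      omega
    rcases Nat.eq_or_lt_of_le hK with hK' | hK'
    · have h1 := fromT_val_K τ1 τ2 j hK'.symm hk
      have h2v : (σ j).val = 0 := by
        have hjK : j = ⟨k+1, by omega⟩ := by ext; simp; omega
        rw [hjK, sigmaK n k hk hσ h0]
        rfl
      omega
    · obtain ⟨j', hj'⟩ : ∃ x : Fin (n-k), j.val = x.val + k + 2 :=
        ⟨⟨j.val - (k+2), by omega⟩, by simp; omega⟩
      have h1 := fromT_val_hi τ1 τ2 j j' hj' hk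
      have h2 := toT2_val n k hk σ hbhi j' j hj'
      rw [← hτ2] at h2
      have hbj := hbhi j (by omega)
      omega
  right_inv := by
    rintro ⟨⟨τ1, hτ1⟩, ⟨τ2, hτ2⟩⟩
    have hσ := NC_fromT hk τ1 τ2 hτ1 hτ2
    have h0' : fromT n k hk τ1 τ2 0 = ⟨k+1, by omega⟩ := by
      ext; exact fromT_val_zero τ1 τ2 0 rfl hk
    have hblo : ∀ j : Fin (n+2), 0 < j.val → j.val < k+1 →
        0 < (fromT n k hk τ1 τ2 j).val ∧ (fromT n k hk τ1 τ2 j).val < k+1 :=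
      fun j a b => block_lo n k hk hσ h0' j a b
    have hbhi : ∀ j : Fin (n+2), k+1 < j.val → k+1 < (fromT n k hk τ1 τ2 j).val :=
      fun j a => block_hi n k hk hσ h0' j a
    ext i
    · show (toT1 n k hk (fromT n k hk τ1 τ2) hblo i).val = (τ1 i).val
      have hik := i.isLt
      have h1 := toT1_val n k hk (fromT n k hk τ1 τ2) hblo i ⟨i.val + 1, by omega⟩ (by simp)
      have h2 := fromT_val_lo τ1 τ2 (⟨i.val + 1, by omega⟩ : Fin (n+2)) i (by simp) hk
      omega
    · show (toT2 n k hk (fromT n k hk τ1 τ2) hbhi i).val = (τ2 i).val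
      have hik := i.isLt
      have h1 := toT2_val n k hk (fromT n k hk τ1 τ2) hbhi i ⟨i.val + k + 2, by omega⟩ (by simp)
      have h2 := fromT_val_hi τ1 τ2 (⟨i.val + k + 2, by omega⟩ : Fin (n+2)) i (by simp) hk
      omega

end CaseB2

/-! ### Counting -/

lemma natCard_sigma {ι : Type*} [Fintype ι] (g : ι → Type*) [∀ i, Finite (g i)] :
    Nat.card ((i : ι) × g i) = ∑ i, Nat.card (g i) := by
  letI : ∀ i, Fintype (g i) := fun i => Fintype.ofFinite _
  simp [Nat.card_eq_fintype_card]

lemma fcnt_zero : fcnt 0 = 1 := by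
  have h : ∀ σ : Fin 0 → Fin 0, NC 0 σ :=
    fun σ => ⟨fun x => x.elim0, fun ⟨i, _⟩ => i.elim0⟩
  have : Nonempty {σ : Fin 0 → Fin 0 // NC 0 σ} := ⟨⟨fun x => x.elim0, h _⟩⟩
  exact Nat.card_unique

lemma fcnt_one : fcnt 1 = 1 := by
  have h : ∀ σ : Fin 1 → Fin 1, NC 1 σ := by
    intro σ
    refine ⟨fun x => Subsingleton.elim _ _, ?_⟩
    rintro ⟨i, j, hij, -⟩
    have := i.isLt; have := j.isLt; omega
  have : Nonempty {σ : Fin 1 → Fin 1 // NC 1 σ} := ⟨⟨fun x => x, h _⟩⟩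
  have hsub : Subsingleton {σ : Fin 1 → Fin 1 // NC 1 σ} := by
    constructor
    rintro ⟨a, _⟩ ⟨b, _⟩
    exact Subtype.ext (Subsingleton.elim a b)
  exact Nat.card_unique

lemma fcnt_rec (n : ℕ) :
    fcnt (n+2) = fcnt (n+1) + ∑ i ∈ Finset.range (n+1), fcnt i * fcnt (n - i) := by
  classical
  have e1 : {σ : Fin (n+2) → Fin (n+2) // NC (n+2) σ} ≃
      Σ c : Fin (n+2), {σ : Fin (n+2) → Fin (n+2) // NC (n+2) σ ∧ σ 0 = c} :=
    ((Equiv.sigmaFiberEquiv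
        (fun x : {σ : Fin (n+2) → Fin (n+2) // NC (n+2) σ} => x.1 0)).symm).trans
      (Equiv.sigmaCongrRight (fun c =>
        Equiv.subtypeSubtypeEquivSubtypeInter (NC (n+2)) (fun σ => σ 0 = c)))
  have h1 : fcnt (n+2) =
      ∑ c : Fin (n+2), Nat.card {σ : Fin (n+2) → Fin (n+2) // NC (n+2) σ ∧ σ 0 = c} := by
    rw [fcnt, Nat.card_congr e1, natCard_sigma]
  rw [h1, Fin.sum_univ_succ]
  congr 1
  · exact Nat.card_congr (equivA n)
  · have hterm : ∀ i : Fin (n+1),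
        Nat.card {σ : Fin (n+2) → Fin (n+2) // NC (n+2) σ ∧ σ 0 = Fin.succ i} =
          fcnt i.val * fcnt (n - i.val) := by
      intro i
      have hi : i.val ≤ n := Nat.lt_succ_iff.mp i.isLt
      have hsucc : (Fin.succ i : Fin (n+2)) = ⟨i.val + 1, Nat.succ_lt_succ i.isLt⟩ := rfl
      rw [hsucc, Nat.card_congr (equivB hi), Nat.card_prod]
      rfl
    rw [Finset.sum_congr rfl (fun i _ => hterm i)]
    exact Fin.sum_univ_eq_sum_range (fun i => fcnt i * fcnt (n - i)) (n+1)

lemma fcnt_eq_motzkin : ∀ n, fcnt n = motzkin n := by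
  intro n
  induction n using Nat.strong_induction_on with
  | _ n ih =>
    match n with
    | 0 => rw [fcnt_zero, motzkin]
    | 1 => rw [fcnt_one, motzkin]
    | n + 2 =>
      rw [fcnt_rec, motzkin]
      congr 1
      · exact ih (n+1) (by omega)
      · rw [Finset.sum_attach (Finset.range (n+1)) (fun i => motzkin i * motzkin (n - i))]
        exact Finset.sum_congr rfl fun i hi =>
          by rw [ih i (by simp at hi; omega), ih (n - i) (by omega)]

theorem card_twoBrauer_eq_motzkin (n : ℕ) (hn : 1 ≤ n) :
    {σ : ZMod n → ZMod n | IsTwoBrauer n σ}.Finite ∧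
      {σ : ZMod n → ZMod n | IsTwoBrauer n σ}.ncard = motzkin n := by
  obtain ⟨m, rfl⟩ : ∃ m, n = m + 1 := ⟨n - 1, by omega⟩
  have hEq : {σ : ZMod (m+1) → ZMod (m+1) | IsTwoBrauer (m+1) σ} =
      {σ : Fin (m+1) → Fin (m+1) | NC (m+1) σ} := rfl
  rw [hEq]
  exact ⟨Set.toFinite _, by
    exact (Nat.card_coe_set_eq _).symm.trans (fcnt_eq_motzkin (m+1))⟩
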